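/- Let ρ and σ be positive semidefinite matrices on a finite-dimensional Hilbert space and Π an orthogonal projection. Then ‖√(ΠρΠ)√σ‖₁ = ‖√ρ√(ΠσΠ)‖₁ = ‖√(ΠρΠ)√(ΠσΠ)‖₁. Moreover, for any positive semidefinite ω with ω ≥ ρ in the Loewner order, ‖√ω√σ‖₁ ≥ ‖√ρ√σ‖₁. -/

import Mathlib

open scoped Matrix Kronecker BigOperators
open Matrix
open scoped ComplexOrder Classical

namespace Paper

/-- Total positive semidefinite square root (junk value `0` off the PSD cone). -/
noncomputable def psqrt {n : Type*} [Fintype n] [DecidableEq n] (A : Matrix n n ℂ) :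
    Matrix n n ℂ :=
  if h : A.PosSemidef then
    (h.1.eigenvectorUnitary : Matrix n n ℂ) *
      Matrix.diagonal ((↑) ∘ (fun x : ℝ => Real.sqrt x) ∘ h.1.eigenvalues) *
      (star h.1.eigenvectorUnitary : Matrix n n ℂ)
  else 0

/-- Trace norm `‖A‖₁ = Tr √(AᴴA)`. -/
noncomputable def traceNorm {n : Type*} [Fintype n] [DecidableEq n] (A : Matrix n n ℂ) : ℝ :=
  (psqrt (Aᴴ * A)).trace.re

/-- Fidelity `F(ρ,σ) = ‖√ρ√σ‖₁` of positive semidefinite matrices. -/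
noncomputable def fidelity {n : Type*} [Fintype n] [DecidableEq n] (ρ σ : Matrix n n ℂ) : ℝ :=
  traceNorm (psqrt ρ * psqrt σ)

/-- Purified distance `P(ρ,σ) = √(1 - F(ρ,σ)²)`. -/
noncomputable def purDist {n : Type*} [Fintype n] [DecidableEq n] (ρ σ : Matrix n n ℂ) : ℝ :=
  Real.sqrt (1 - fidelity ρ σ ^ 2)

/-- A state (density matrix): positive semidefinite with unit trace. -/
def IsState {n : Type*} [Fintype n] (ρ : Matrix n n ℂ) : Prop :=
  ρ.PosSemidef ∧ ρ.trace = 1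

/-- A probability mass function on a finite alphabet. -/
def IsPMF {X : Type*} [Fintype X] (p : X → ℝ) : Prop :=
  (∀ x, 0 ≤ p x) ∧ ∑ x, p x = 1

/-- Support inclusion `supp ρ ⊆ supp σ`, phrased via kernels (equivalent for PSD matrices). -/
def SuppSubset {n : Type*} [Fintype n] (ρ σ : Matrix n n ℂ) : Prop :=
  ∀ v : n → ℂ, σ.mulVec v = 0 → ρ.mulVec v = 0

/-- Loewner order `A ≤ B`. -/
def LLE {n : Type*} [Fintype n] (A B : Matrix n n ℂ) : Prop := (B - A).PosSemidef

/-- Binary logarithm of a Hermitian matrix, taken on its support via functional calculus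
(`Real.logb 2 0 = 0` takes care of the kernel). -/
noncomputable def matLog {n : Type*} [Fintype n] [DecidableEq n] (A : Matrix n n ℂ) :
    Matrix n n ℂ :=
  if hA : A.IsHermitian then
    (hA.eigenvectorUnitary : Matrix n n ℂ) *
      Matrix.diagonal (fun i => (Real.logb 2 (hA.eigenvalues i) : ℂ)) *
      (star (hA.eigenvectorUnitary : Matrix n n ℂ))
  else 0

/-- Quantum relative entropy (base 2): `D(ρ‖σ) = Tr(ρ log₂ ρ) - Tr(ρ log₂ σ)`. -/
noncomputable def relEnt {n : Type*} [Fintype n] [DecidableEq n] (ρ σ : Matrix n n ℂ) : ℝ :=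
  ((ρ * matLog ρ).trace - (ρ * matLog σ).trace).re

/-- Max-relative entropy `D_max(ρ‖σ) = inf {λ | ρ ≤ 2^λ σ}`. -/
noncomputable def dMax {n : Type*} [Fintype n] (ρ σ : Matrix n n ℂ) : ℝ :=
  sInf {l : ℝ | LLE ρ ((2 : ℝ) ^ l • σ)}

/-- Smooth max-relative entropy `D_max^ε(ρ‖σ) = min_{ρ' ∈ B^ε(ρ)} D_max(ρ'‖σ)`. -/
noncomputable def dMaxSmooth {n : Type*} [Fintype n] [DecidableEq n]
    (ε : ℝ) (ρ σ : Matrix n n ℂ) : ℝ :=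
  sInf {d : ℝ | ∃ ρ' : Matrix n n ℂ, IsState ρ' ∧ purDist ρ' ρ ≤ ε ∧ d = dMax ρ' σ}

/-- Partial trace over the second (B) factor. -/
noncomputable def ptraceB {a b : Type*} [Fintype b]
    (M : Matrix (a × b) (a × b) ℂ) : Matrix a a ℂ :=
  Matrix.of fun i j => ∑ k : b, M (i, k) (j, k)

/-- Partial trace over the first (A) factor. -/
noncomputable def ptraceA {a b : Type*} [Fintype a]
    (M : Matrix (a × b) (a × b) ℂ) : Matrix b b ℂ :=
  Matrix.of fun i j => ∑ k : a, M (k, i) (k, j)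

/-- The cq state `Σ_x p(x) |x⟩⟨x| ⊗ ρ_x`. -/
noncomputable def cqState {X d : Type*} [Fintype X] [DecidableEq X] [Fintype d] [DecidableEq d]
    (p : X → ℝ) (ρ : X → Matrix d d ℂ) : Matrix (X × d) (X × d) ℂ :=
  ∑ x, p x • (Matrix.single x x (1 : ℂ) ⊗ₖ ρ x)

/-- The Markov state `ρ^{A-X-B} = Σ_x p(x)|x⟩⟨x| ⊗ ρ_x^A ⊗ ρ_x^B` of a cq state. -/
noncomputable def markovState {X a b : Type*} [Fintype X] [DecidableEq X]
    [Fintype a] [DecidableEq a] [Fintype b] [DecidableEq b]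
    (p : X → ℝ) (ρ : X → Matrix (a × b) (a × b) ℂ) :
    Matrix (X × (a × b)) (X × (a × b)) ℂ :=
  cqState p fun x => ptraceB (ρ x) ⊗ₖ ptraceA (ρ x)

/-- Conditional mutual information `I(A;B|X)_ρ = D(ρ^{XAB} ‖ ρ^{A-X-B})` of a cq state. -/
noncomputable def condMI {X a b : Type*} [Fintype X] [DecidableEq X]
    [Fintype a] [DecidableEq a] [Fintype b] [DecidableEq b]
    (p : X → ℝ) (ρ : X → Matrix (a × b) (a × b) ℂ) : ℝ :=
  relEnt (cqState p ρ) (markovState p ρ)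

/-- `D_max^ε(A;B|X)_ρ = D_max^ε(ρ^{XAB} ‖ ρ^{A-X-B})` of a cq state. -/
noncomputable def condDmaxSmooth {X a b : Type*} [Fintype X] [DecidableEq X]
    [Fintype a] [DecidableEq a] [Fintype b] [DecidableEq b]
    (ε : ℝ) (p : X → ℝ) (ρ : X → Matrix (a × b) (a × b) ℂ) : ℝ :=
  dMaxSmooth ε (cqState p ρ) (markovState p ρ)

/-- `Ĩ_max^ε(A;B|X)_ρ`: minimum of `D_max(ρ' ‖ Σ_x p'(x)|x⟩⟨x| ⊗ ρ'^A_x ⊗ ρ^B_x)` over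
cq states `ρ'` in the ε-ball around `ρ^{XAB}`. -/
noncomputable def condImaxTilde {X a b : Type*} [Fintype X] [DecidableEq X]
    [Fintype a] [DecidableEq a] [Fintype b] [DecidableEq b]
    (ε : ℝ) (p : X → ℝ) (ρ : X → Matrix (a × b) (a × b) ℂ) : ℝ :=
  sInf {d : ℝ | ∃ (p' : X → ℝ) (ρ' : X → Matrix (a × b) (a × b) ℂ),
    IsPMF p' ∧ (∀ x, IsState (ρ' x)) ∧
    purDist (cqState p' ρ') (cqState p ρ) ≤ ε ∧
    d = dMax (cqState p' ρ') (cqState p' fun x => ptraceB (ρ' x) ⊗ₖ ptraceA (ρ x))}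

/-- `Ĩ_max^ε(A;B)_ρ = inf_{ρ' ∈ B^ε(ρ)} D_max(ρ' ‖ ρ'^A ⊗ ρ^B)` for a bipartite state. -/
noncomputable def bipImaxTilde {a b : Type*} [Fintype a] [DecidableEq a]
    [Fintype b] [DecidableEq b] (ε : ℝ) (ρ : Matrix (a × b) (a × b) ℂ) : ℝ :=
  sInf {d : ℝ | ∃ ρ' : Matrix (a × b) (a × b) ℂ, IsState ρ' ∧ purDist ρ' ρ ≤ ε ∧
    d = dMax ρ' (ptraceB ρ' ⊗ₖ ptraceA ρ)}

/-- The binary entropy function. -/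
noncomputable def binEnt (ε : ℝ) : ℝ :=
  -(ε * Real.logb 2 ε) - (1 - ε) * Real.logb 2 (1 - ε)

/-- Hypothesis testing relative entropy `D_H^ε(ρ‖σ)`. -/
noncomputable def dH {n : Type*} [Fintype n] [DecidableEq n] (ε : ℝ) (ρ σ : Matrix n n ℂ) : ℝ :=
  sSup {d : ℝ | ∃ Λ : Matrix n n ℂ, Λ.PosSemidef ∧ (1 - Λ).PosSemidef ∧
    1 - ε ≤ ((Λ * ρ).trace).re ∧ d = -Real.logb 2 (((Λ * σ).trace).re)}

/-- The convex-split state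
`τ^{XAB₁…Bₙ} = Σ_x p(x)|x⟩⟨x| ⊗ (1/n) Σ_j ρ_x^{AB_j} ⊗ (⊗_{i≠j} σ_x^{B_i})`,
written entrywise on the index type `X × (A × Bⁿ)`. -/
noncomputable def tauState {X a b : Type*} [Fintype X] [DecidableEq X]
    [Fintype a] [Fintype b]
    (p : X → ℝ) (ρ : X → Matrix (a × b) (a × b) ℂ) (σ : X → Matrix b b ℂ) (nn : ℕ) :
    Matrix (X × (a × (Fin nn → b))) (X × (a × (Fin nn → b))) ℂ :=
  Matrix.of fun q q' =>
    (if q.1 = q'.1 then (p q.1 : ℂ) else 0) *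
      ((nn : ℂ)⁻¹ * ∑ j : Fin nn,
        ρ q.1 (q.2.1, q.2.2 j) (q'.2.1, q'.2.2 j) *
          ∏ i ∈ Finset.univ.erase j, σ q.1 (q.2.2 i) (q'.2.2 i))

/-- The product reference state
`Σ_x p(x)|x⟩⟨x| ⊗ ρ_x^A ⊗ σ_x^{B₁} ⊗ … ⊗ σ_x^{Bₙ}`, entrywise. -/
noncomputable def refState {X a b : Type*} [Fintype X] [DecidableEq X]
    [Fintype a] [Fintype b]
    (p : X → ℝ) (ρ : X → Matrix (a × b) (a × b) ℂ) (σ : X → Matrix b b ℂ) (nn : ℕ) :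
    Matrix (X × (a × (Fin nn → b))) (X × (a × (Fin nn → b))) ℂ :=
  Matrix.of fun q q' =>
    (if q.1 = q'.1 then (p q.1 : ℂ) else 0) *
      (ptraceB (ρ q.1) q.2.1 q'.2.1 * ∏ i : Fin nn, σ q.1 (q.2.2 i) (q'.2.2 i))



set_option linter.unusedSectionVars false
set_option maxHeartbeats 1000000
section Helpers
variable {d : Type*} [Fintype d] [DecidableEq d]

noncomputable def _root_.Matrix.PosSemidef.sqrt {n : Type*} [Fintype n] [DecidableEq n]
    {A : Matrix n n ℂ} (h : A.PosSemidef) : Matrix n n ℂ :=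
  (h.1.eigenvectorUnitary : Matrix n n ℂ) *
      Matrix.diagonal ((↑) ∘ (fun x : ℝ => Real.sqrt x) ∘ h.1.eigenvalues) *
      (star h.1.eigenvectorUnitary : Matrix n n ℂ)

section
open scoped MatrixOrder
lemma _root_.Matrix.PosSemidef.sqrt_eq_cfc {n : Type*} [Fintype n] [DecidableEq n]
    {A : Matrix n n ℂ} (h : A.PosSemidef) : h.sqrt = CFC.sqrt A := by
  rw [CFC.sqrt_eq_cfc, cfc_nnreal_eq_real _ A, h.1.cfc_eq, IsHermitian.cfc, Unitary.conjStarAlgAut_apply,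
    Matrix.PosSemidef.sqrt]
  congr 3
  funext i
  simp [h.eigenvalues_nonneg i]

lemma _root_.Matrix.PosSemidef.posSemidef_sqrt {n : Type*} [Fintype n] [DecidableEq n]
    {A : Matrix n n ℂ} (h : A.PosSemidef) : h.sqrt.PosSemidef := by
  rw [h.sqrt_eq_cfc]; exact (CFC.sqrt_nonneg A).posSemidef

lemma _root_.Matrix.PosSemidef.sqrt_mul_self {n : Type*} [Fintype n] [DecidableEq n]
    {A : Matrix n n ℂ} (h : A.PosSemidef) : h.sqrt * h.sqrt = A := by
  rw [h.sqrt_eq_cfc]; exact CFC.sqrt_mul_sqrt_self A h.nonneg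

lemma _root_.Matrix.PosSemidef.eq_sqrt_of_sq_eq {n : Type*} [Fintype n] [DecidableEq n]
    {A B : Matrix n n ℂ} (hA : A.PosSemidef) (hB : B.PosSemidef) (hAB : A ^ 2 = B) :
    A = hB.sqrt := by
  rw [hB.sqrt_eq_cfc]
  exact (CFC.sqrt_unique (by rw [← sq]; exact hAB) hA.nonneg).symm
end

lemma psqrt_eq {A : Matrix d d ℂ} (h : A.PosSemidef) : psqrt A = h.sqrt := dif_pos h

lemma trace_sqrt_eq {A : Matrix d d ℂ} (h : A.PosSemidef) :
    h.sqrt.trace = ∑ i, (Real.sqrt (h.1.eigenvalues i) : ℂ) := by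
  rw [Matrix.PosSemidef.sqrt, Matrix.trace_mul_cycle,
    (Matrix.mem_unitaryGroup_iff').mp h.1.eigenvectorUnitary.2, one_mul, trace_diagonal]
  rfl

lemma trace_CS_re_nonneg (M : Matrix d d ℂ) : 0 ≤ (Mᴴ * M).trace.re := by
  rw [Matrix.trace, Complex.re_sum]
  apply Finset.sum_nonneg
  intro i _
  rw [Matrix.diag_apply, Matrix.mul_apply, Complex.re_sum]
  apply Finset.sum_nonneg
  intro a _
  simp only [Matrix.conjTranspose_apply]
  rw [show (star (M a i) * M a i) = ((Complex.normSq (M a i) : ℝ) : ℂ) by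
    rw [Complex.star_def, Complex.normSq_eq_conj_mul_self]]
  simpa using Complex.normSq_nonneg _

lemma psd_trace_re_nonneg {N : Matrix d d ℂ} (h : N.PosSemidef) : 0 ≤ N.trace.re := by
  have := trace_CS_re_nonneg h.sqrt
  rwa [h.posSemidef_sqrt.1, h.sqrt_mul_self] at this

lemma trace_psqrt_mono {A B : Matrix d d ℂ} (hA : A.PosSemidef) (hB : B.PosSemidef)
    (hle : (B - A).PosSemidef) : (psqrt A).trace.re ≤ (psqrt B).trace.re := by
  rw [psqrt_eq hA, psqrt_eq hB]
  set μ : d → ℝ := hB.1.eigenvalues with hμ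
  have hμ0 : ∀ i, 0 ≤ μ i := hB.eigenvalues_nonneg
  set V : Matrix d d ℂ := (hB.1.eigenvectorUnitary : Matrix d d ℂ) with hVdef
  have hVU : V * star V = 1 := (Matrix.mem_unitaryGroup_iff).mp hB.1.eigenvectorUnitary.2
  have hUV : star V * V = 1 := (Matrix.mem_unitaryGroup_iff').mp hB.1.eigenvectorUnitary.2
  have hVH : star V = Vᴴ := rfl
  set D : Matrix d d ℂ := Matrix.diagonal (fun i => ((μ i : ℝ) : ℂ)) with hD
  have hspec : Vᴴ * B * V = D := by
    have := hB.1.conjStarAlgAut_star_eigenvectorUnitary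
    rw [Unitary.conjStarAlgAut_star_apply] at this
    exact this
  set A' : Matrix d d ℂ := Vᴴ * A * V with hA'def
  have hA' : A'.PosSemidef := hA.conjTranspose_mul_mul_same V
  have hDA' : (D - A').PosSemidef := by
    have h : D - A' = Vᴴ * (B - A) * V := by rw [← hspec, hA'def]; noncomm_ring
    rw [h]; exact hle.conjTranspose_mul_mul_same V
  set T := hA'.sqrt with hT
  have hTps : T.PosSemidef := hA'.posSemidef_sqrt
  have hTH : Tᴴ = T := hTps.1
  have hT2 : T * T = A' := hA'.sqrt_mul_self
  have htrA : hA.sqrt.trace = T.trace := by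
    have hX : (Vᴴ * hA.sqrt * V).PosSemidef := hA.posSemidef_sqrt.conjTranspose_mul_mul_same V
    have hXsq : (Vᴴ * hA.sqrt * V) ^ 2 = A' := by
      rw [pow_two, hA'def]
      calc Vᴴ * hA.sqrt * V * (Vᴴ * hA.sqrt * V)
          = Vᴴ * hA.sqrt * (V * Vᴴ) * hA.sqrt * V := by noncomm_ring
        _ = Vᴴ * (hA.sqrt * hA.sqrt) * V := by rw [← hVH, hVU]; noncomm_ring
        _ = Vᴴ * A * V := by rw [hA.sqrt_mul_self]
    have heq : Vᴴ * hA.sqrt * V = T := hX.eq_sqrt_of_sq_eq hA' hXsq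
    rw [← heq, Matrix.trace_mul_cycle, ← hVH, hVU, one_mul]
  -- diagonal gadgets
  set z : d → ℝ := fun i => Real.sqrt (Real.sqrt (μ i)) with hz
  set zp : d → ℝ := fun i => if μ i = 0 then 0 else (z i)⁻¹ with hzp
  set e : d → ℝ := fun i => if μ i = 0 then 0 else 1 with he
  set Z : Matrix d d ℂ := Matrix.diagonal (fun i => ((z i : ℝ) : ℂ)) with hZ
  set Zp : Matrix d d ℂ := Matrix.diagonal (fun i => ((zp i : ℝ) : ℂ)) with hZp
  set E : Matrix d d ℂ := Matrix.diagonal (fun i => ((e i : ℝ) : ℂ)) with hE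
  have hzne : ∀ i, μ i ≠ 0 → z i ≠ 0 := by
    intro i hi
    have : 0 < μ i := lt_of_le_of_ne (hμ0 i) (Ne.symm hi)
    simp only [hz]
    positivity
  have hze : ∀ i, z i * zp i = e i := by
    intro i
    by_cases hi : μ i = 0
    · simp [hzp, he, hi]
    · simp only [hzp, he, if_neg hi]
      exact mul_inv_cancel₀ (hzne i hi)
  have hZZp : Z * Zp = E := by
    rw [hZ, hZp, hE, diagonal_mul_diagonal]
    exact congrArg Matrix.diagonal (funext fun i => by rw [← hze i]; push_cast; ring)
  have hZpZ : Zp * Z = E := by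
    rw [hZ, hZp, hE, diagonal_mul_diagonal]
    exact congrArg Matrix.diagonal (funext fun i => by rw [← hze i]; push_cast; ring)
  have hZH : Zᴴ = Z := by
    rw [hZ, diagonal_conjTranspose]
    exact congrArg Matrix.diagonal (funext fun i => by
      simp [Pi.star_apply, Complex.star_def, Complex.conj_ofReal])
  have hZpH : Zpᴴ = Zp := by
    rw [hZp, diagonal_conjTranspose]
    exact congrArg Matrix.diagonal (funext fun i => by
      simp [Pi.star_apply, Complex.star_def, Complex.conj_ofReal])
  have hEH : Eᴴ = E := by
    rw [hE, diagonal_conjTranspose]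
    exact congrArg Matrix.diagonal (funext fun i => by
      simp [Pi.star_apply, Complex.star_def, Complex.conj_ofReal])
  set G : Matrix d d ℂ := Matrix.diagonal (fun i => ((1 - e i : ℝ) : ℂ)) with hG
  have hGH : Gᴴ = G := by
    rw [hG, diagonal_conjTranspose]
    exact congrArg Matrix.diagonal (funext fun i => by
      simp [Pi.star_apply, Complex.star_def, map_sub, Complex.conj_ofReal])
  have hEG : E + G = 1 := by
    rw [hE, hG, diagonal_add, ← diagonal_one]
    exact congrArg Matrix.diagonal (funext fun i => by push_cast; ring)
  have hGD : G * D = 0 := by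
    rw [hG, hD, diagonal_mul_diagonal]
    rw [show (0 : Matrix d d ℂ) = Matrix.diagonal (fun _ => (0:ℂ)) by simp]
    refine congrArg Matrix.diagonal (funext fun i => ?_)
    by_cases hi : μ i = 0
    · simp [hi]
    · simp [he, hi]
  have hTG : T * G = 0 := by
    have hkey : (T * G)ᴴ * (T * G) = - (Gᴴ * (D - A') * G) := by
      rw [conjTranspose_mul, hTH, hGH]
      calc G * T * (T * G) = G * (T * T) * G := by noncomm_ring
        _ = G * A' * G := by rw [hT2]
        _ = -(G * (D - A') * G) + G * D * G := by noncomm_ring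
        _ = -(G * (D - A') * G) := by rw [hGD, zero_mul, add_zero]
      -- note Gᴴ = G used
    have hX0 : (T * G)ᴴ * (T * G) = 0 := by
      have hP : (Gᴴ * (D - A') * G).PosSemidef := hDA'.conjTranspose_mul_mul_same G
      have hPSD : ((T * G)ᴴ * (T * G)).PosSemidef := posSemidef_conjTranspose_mul_self _
      apply Matrix.ext; intro a b
      have hv : ∀ v : d → ℂ, ((T * G)ᴴ * (T * G)) *ᵥ v = 0 := by
        intro v
        have h2 := hPSD.dotProduct_mulVec_nonneg v
        have h3 : star v ⬝ᵥ ((T * G)ᴴ * (T * G)) *ᵥ v ≤ 0 := by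
          rw [hkey, neg_mulVec, dotProduct_neg]
          exact neg_nonpos_of_nonneg (hP.dotProduct_mulVec_nonneg v)
        exact (hPSD.dotProduct_mulVec_zero_iff v).mp (le_antisymm h3 h2)
      simpa [Matrix.mulVec_single] using congrFun (hv (Pi.single b 1)) a
    exact Matrix.conjTranspose_mul_self_eq_zero.mp hX0
  have hTE : T * E = T := by
    have h1 : E = 1 - G := by rw [← hEG, add_sub_cancel_right]
    rw [h1, mul_sub, mul_one, hTG, sub_zero]
  have hET : E * T = T := by
    have h1 := congrArg conjTranspose hTE
    rwa [conjTranspose_mul, hEH, hTH] at h1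
  -- real quantities
  set x : ℝ := T.trace.re with hx
  set aa : ℝ := ∑ i, Real.sqrt (μ i) with ha
  set c : ℝ := (Zp * A' * Zp).trace.re with hc
  have hZ2 : Z * Z = Matrix.diagonal (fun i => ((Real.sqrt (μ i) : ℝ) : ℂ)) := by
    rw [hZ, diagonal_mul_diagonal]
    refine congrArg Matrix.diagonal (funext fun i => ?_)
    rw [show Real.sqrt (μ i) = z i * z i from (Real.mul_self_sqrt (Real.sqrt_nonneg _)).symm]
    push_cast; ring
  have hZZtr : (Z * Z).trace.re = aa := by
    rw [hZ2, trace_diagonal, Complex.re_sum]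
    simp [ha]
  have key : ∀ t : ℝ, 0 ≤ aa * (t * t) + (-(2*x)) * t + c := by
    intro t
    have hM := trace_CS_re_nonneg ((t:ℂ) • Z - T * Zp)
    have hMH : ((t:ℂ) • Z - T * Zp)ᴴ = (t:ℂ) • Z - Zp * T := by
      rw [conjTranspose_sub, conjTranspose_smul, conjTranspose_mul, hTH, hZH, hZpH,
        Complex.star_def, Complex.conj_ofReal]
    rw [hMH] at hM
    have hexp : ((t:ℂ) • Z - Zp * T) * ((t:ℂ) • Z - T * Zp)
        = ((t*t : ℝ) : ℂ) • (Z * Z) - (t:ℂ) • (Z * (T * Zp)) - (t:ℂ) • (Zp * (T * Z))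
          + Zp * (T * T) * Zp := by
      push_cast
      rw [sub_mul, mul_sub, mul_sub, smul_mul_assoc, smul_mul_assoc, mul_smul_comm,
        mul_smul_comm, smul_smul]
      noncomm_ring
    rw [hexp] at hM
    have htr1 : (Z * (T * Zp)).trace = T.trace := by
      rw [Matrix.trace_mul_comm, mul_assoc, hZpZ, hTE]
    have htr2 : (Zp * (T * Z)).trace = T.trace := by
      rw [Matrix.trace_mul_comm, mul_assoc, hZZp, hTE]
    have htr3 : (Zp * (T * T) * Zp).trace = (Zp * A' * Zp).trace := by rw [hT2]
    rw [trace_add, trace_sub, trace_sub, trace_smul, trace_smul, trace_smul,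
      htr1, htr2, htr3] at hM
    simp only [Complex.add_re, Complex.sub_re, smul_eq_mul, Complex.re_ofReal_mul] at hM
    rw [hZZtr] at hM
    calc (0:ℝ) ≤ t * t * aa - t * T.trace.re - t * T.trace.re + (Zp * A' * Zp).trace.re := hM
      _ = aa * (t * t) + (-(2*x)) * t + c := by rw [← hx, ← hc]; ring
  have hdis := discrim_le_zero key
  rw [discrim] at hdis
  have hxac : x * x ≤ aa * c := by nlinarith [hdis]
  have hc0 : 0 ≤ c := by
    have hP : (Zp * A' * Zp).PosSemidef := by
      have := hA'.mul_mul_conjTranspose_same Zp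
      rwa [hZpH] at this
    exact psd_trace_re_nonneg hP
  have hca : c ≤ aa := by
    have hP : (Zp * (D - A') * Zp).PosSemidef := by
      have := hDA'.mul_mul_conjTranspose_same Zp
      rwa [hZpH] at this
    have hnn := psd_trace_re_nonneg hP
    have hsplit : Zp * (D - A') * Zp = Zp * D * Zp - Zp * A' * Zp := by noncomm_ring
    rw [hsplit, trace_sub, Complex.sub_re] at hnn
    have hZpDZp : (Zp * D * Zp).trace.re = ∑ i, (if μ i = 0 then 0 else Real.sqrt (μ i)) := by
      rw [hZp, hD, diagonal_mul_diagonal, diagonal_mul_diagonal, trace_diagonal,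
        Complex.re_sum]
      apply Finset.sum_congr rfl
      intro i _
      by_cases hi : μ i = 0
      · simp [hzp, hi]
      · have hzz : z i * z i = Real.sqrt (μ i) := Real.mul_self_sqrt (Real.sqrt_nonneg _)
        have hzi := hzne i hi
        have hval : zp i * μ i * zp i = Real.sqrt (μ i) := by
          simp only [hzp, if_neg hi]
          rw [show μ i = Real.sqrt (μ i) * Real.sqrt (μ i) from
            (Real.mul_self_sqrt (hμ0 i)).symm, ← hzz]
          field_simp
          rw [show z i ^ 4 = (z i ^ 2) ^ 2 by ring, Real.sqrt_sq (by positivity)]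
        rw [if_neg hi, show ((zp i : ℝ) : ℂ) * ((μ i : ℝ) : ℂ) * ((zp i : ℝ) : ℂ)
          = ((zp i * μ i * zp i : ℝ) : ℂ) by push_cast; ring, hval, Complex.ofReal_re]
    have hsum : ∑ i, (if μ i = 0 then 0 else Real.sqrt (μ i)) ≤ aa := by
      rw [ha]
      apply Finset.sum_le_sum
      intro i _
      split
      · positivity
      · exact le_refl _
    have h1 : (Zp * A' * Zp).trace.re ≤ (Zp * D * Zp).trace.re := by linarith
    rw [hc]
    rw [hZpDZp] at h1
    linarith
  have hx0 : 0 ≤ x := psd_trace_re_nonneg hTps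
  have ha0 : 0 ≤ aa := by rw [ha]; positivity
  have hxa : x ≤ aa := by nlinarith
  have hBtr : hB.sqrt.trace.re = aa := by
    rw [trace_sqrt_eq hB, Complex.re_sum, ha]
    exact Finset.sum_congr rfl fun i _ => Complex.ofReal_re _
  rw [htrA, hBtr]
  exact hxa

lemma trace_psqrt_swap (C : Matrix d d ℂ) :
    (psqrt (Cᴴ * C)).trace = (psqrt (C * Cᴴ)).trace := by
  have h1 : (Cᴴ * C).PosSemidef := Matrix.posSemidef_conjTranspose_mul_self C
  have h2 : (C * Cᴴ).PosSemidef := Matrix.posSemidef_self_mul_conjTranspose C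
  rw [psqrt_eq h1, psqrt_eq h2]
  set lam : d → ℝ := h1.1.eigenvalues with hlam
  have hlam0 : ∀ i, 0 ≤ lam i := h1.eigenvalues_nonneg
  set V : Matrix d d ℂ := (h1.1.eigenvectorUnitary : Matrix d d ℂ) with hVdef
  have hVU : V * star V = 1 := (Matrix.mem_unitaryGroup_iff).mp h1.1.eigenvectorUnitary.2
  have hUV : star V * V = 1 := (Matrix.mem_unitaryGroup_iff').mp h1.1.eigenvectorUnitary.2
  have hVH : star V = Vᴴ := rfl
  set W : Matrix d d ℂ := C * V with hWdef
  have hWW : Wᴴ * W = Matrix.diagonal fun i => ((lam i : ℝ) : ℂ) := by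
    have hspec : star V * (Cᴴ * C) * V = Matrix.diagonal (RCLike.ofReal ∘ lam) := by
      have := h1.1.conjStarAlgAut_star_eigenvectorUnitary
      rw [Unitary.conjStarAlgAut_star_apply] at this
      exact this
    calc Wᴴ * W = star V * (Cᴴ * C) * V := by
          rw [hWdef, conjTranspose_mul, hVH]; noncomm_ring
      _ = _ := by rw [hspec]; rfl
  -- columns with zero eigenvalue vanish
  have hcol : ∀ i, lam i = 0 → ∀ a, W a i = 0 := by
    intro i hi a
    have h' : (Wᴴ * W) i i = ((lam i : ℝ) : ℂ) := by
      rw [hWW]; simp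
    rw [Matrix.mul_apply] at h'
    have h'' : ∑ x, ((Complex.normSq (W x i) : ℝ) : ℂ) = 0 := by
      calc ∑ x, ((Complex.normSq (W x i) : ℝ) : ℂ)
          = ∑ x, Wᴴ i x * W x i := Finset.sum_congr rfl fun x _ => by
            rw [Matrix.conjTranspose_apply, Complex.star_def,
              Complex.normSq_eq_conj_mul_self]
        _ = ((lam i : ℝ) : ℂ) := h'
        _ = 0 := by rw [hi]; norm_num
    have hre : ∑ x, Complex.normSq (W x i) = 0 := by exact_mod_cast h''
    have := (Finset.sum_eq_zero_iff_of_nonneg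
      (fun x _ => Complex.normSq_nonneg (W x i))).mp hre a (Finset.mem_univ a)
    exact Complex.normSq_eq_zero.mp this
  set f : d → ℝ := fun i => if lam i = 0 then 0 else (Real.sqrt (lam i))⁻¹ with hf
  set S : Matrix d d ℂ := W * Matrix.diagonal (fun i => ((f i : ℝ) : ℂ)) * Wᴴ with hS
  have hSpsd : S.PosSemidef := by
    apply Matrix.PosSemidef.mul_mul_conjTranspose_same
    refine Matrix.posSemidef_diagonal_iff.mpr fun i => ?_
    have hfn : 0 ≤ f i := by
      simp only [hf]; split <;> positivity
    exact_mod_cast hfn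
  have hWWH : W * Wᴴ = C * Cᴴ := by
    rw [hWdef, conjTranspose_mul, hVH.symm, mul_assoc, ← mul_assoc V _ _, hVU, one_mul]
  have hSsq : S ^ 2 = C * Cᴴ := by
    rw [pow_two, hS]
    have : W * Matrix.diagonal (fun i => ((f i : ℝ) : ℂ)) * Wᴴ *
        (W * Matrix.diagonal (fun i => ((f i : ℝ) : ℂ)) * Wᴴ)
        = W * (Matrix.diagonal (fun i => ((f i : ℝ) : ℂ)) * (Wᴴ * W) *
            Matrix.diagonal (fun i => ((f i : ℝ) : ℂ))) * Wᴴ := by noncomm_ring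
    rw [this, hWW, diagonal_mul_diagonal, diagonal_mul_diagonal]
    rw [← hWWH]
    apply Matrix.ext
    intro a b
    rw [Matrix.mul_apply, Matrix.mul_apply]
    apply Finset.sum_congr rfl
    intro i _
    rw [Matrix.mul_diagonal]
    by_cases hi : lam i = 0
    · rw [hcol i hi a]; ring
    · have hfi : f i = (Real.sqrt (lam i))⁻¹ := by simp only [hf]; rw [if_neg hi]
      have hs : Real.sqrt (lam i) ≠ 0 := by
        simpa [Real.sqrt_eq_zero'] using lt_of_le_of_ne (hlam0 i) (Ne.symm hi)
      have hfl : f i * (lam i) * f i = 1 := by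
        rw [hfi]
        rw [show lam i = Real.sqrt (lam i) * Real.sqrt (lam i) from
          (Real.mul_self_sqrt (hlam0 i)).symm]
        field_simp
        rw [Real.sqrt_sq (Real.sqrt_nonneg _)]
      have hc : ((f i : ℝ) : ℂ) * ((lam i : ℝ) : ℂ) * ((f i : ℝ) : ℂ) = 1 := by
        exact_mod_cast hfl
      rw [hc, mul_one]
  have hSeq : S = h2.sqrt := hSpsd.eq_sqrt_of_sq_eq h2 hSsq
  rw [← hSeq, trace_sqrt_eq h1, hS, Matrix.trace_mul_cycle]
  rw [hWW]
  rw [diagonal_mul_diagonal, trace_diagonal]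
  apply Finset.sum_congr rfl
  intro i _
  by_cases hi : lam i = 0
  · simp only [hf, hi, if_pos]
    rw [show h1.1.eigenvalues i = lam i from rfl, hi, Real.sqrt_zero]
    norm_num
  · have hfi : f i = (Real.sqrt (lam i))⁻¹ := by simp only [hf]; rw [if_neg hi]
    have hs : Real.sqrt (lam i) ≠ 0 := by
      simpa [Real.sqrt_eq_zero'] using lt_of_le_of_ne (hlam0 i) (Ne.symm hi)
    have : lam i * f i = Real.sqrt (lam i) := by
      rw [hfi]
      rw [show lam i = Real.sqrt (lam i) * Real.sqrt (lam i) from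
        (Real.mul_self_sqrt (hlam0 i)).symm]
      field_simp
      rw [Real.sqrt_sq (Real.sqrt_nonneg _)]
    rw [show (Real.sqrt (lam i) : ℂ) = ((lam i * f i : ℝ) : ℂ) by rw [this]]
    push_cast; ring


lemma sqrt_absorb {ρ Q : Matrix d d ℂ} (hQH : Qᴴ = Q) (hQ2 : Q * Q = Q)
    (hR : (Q * ρ * Q).PosSemidef) : hR.sqrt * Q = hR.sqrt ∧ Q * hR.sqrt = hR.sqrt := by
  have hTH : hR.sqrtᴴ = hR.sqrt := hR.posSemidef_sqrt.1
  have hT2 : hR.sqrt * hR.sqrt = Q * ρ * Q := hR.sqrt_mul_self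
  have hRQ0 : (Q * ρ * Q) * (1 - Q) = 0 := by
    rw [mul_sub, mul_one, mul_assoc (Q * ρ) Q Q, hQ2, sub_self]
  have h1mQ : (1 - Q)ᴴ = 1 - Q := by rw [conjTranspose_sub, conjTranspose_one, hQH]
  have hTQ : hR.sqrt * (1 - Q) = 0 := by
    apply Matrix.conjTranspose_mul_self_eq_zero.mp
    calc (hR.sqrt * (1 - Q))ᴴ * (hR.sqrt * (1 - Q))
        = (1 - Q) * (hR.sqrt * hR.sqrt) * (1 - Q) := by
          rw [conjTranspose_mul, hTH, h1mQ]; noncomm_ring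
      _ = (1 - Q) * ((Q * ρ * Q) * (1 - Q)) := by rw [hT2]; noncomm_ring
      _ = 0 := by rw [hRQ0, mul_zero]
  have h1 : hR.sqrt * Q = hR.sqrt := by
    have := hTQ
    rw [mul_sub, mul_one, sub_eq_zero] at this
    exact this.symm
  refine ⟨h1, ?_⟩
  have h2 := congrArg conjTranspose h1
  rwa [conjTranspose_mul, hQH, hTH] at h2

end Helpers

/-- trace-norm identities for projections and monotonicity in the
Loewner order. -/
theorem traceNorm_sqrt_projection {d : Type*} [Fintype d] [DecidableEq d]
    (ρ σ ω : Matrix d d ℂ) (hρ : ρ.PosSemidef) (hσ : σ.PosSemidef) (hω : ω.PosSemidef)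
    (Q : Matrix d d ℂ) (hQ : Q.IsHermitian) (hQ2 : Q * Q = Q) (hωρ : LLE ρ ω) :
    traceNorm (psqrt (Q * ρ * Q) * psqrt σ) = traceNorm (psqrt ρ * psqrt (Q * σ * Q)) ∧
    traceNorm (psqrt (Q * ρ * Q) * psqrt σ) =
      traceNorm (psqrt (Q * ρ * Q) * psqrt (Q * σ * Q)) ∧
    traceNorm (psqrt ρ * psqrt σ) ≤ traceNorm (psqrt ω * psqrt σ) := by
  classical
  have hQH : Qᴴ = Q := hQ
  have hR : (Q * ρ * Q).PosSemidef := by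
    have := hρ.mul_mul_conjTranspose_same Q
    rwa [hQH] at this
  have hS : (Q * σ * Q).PosSemidef := by
    have := hσ.mul_mul_conjTranspose_same Q
    rwa [hQH] at this
  obtain ⟨hRQ, hQR⟩ := sqrt_absorb hQH hQ2 hR
  obtain ⟨hSQ, hQS⟩ := sqrt_absorb hQH hQ2 hS
  have hRH : hR.sqrtᴴ = hR.sqrt := hR.posSemidef_sqrt.1
  have hSH : hS.sqrtᴴ = hS.sqrt := hS.posSemidef_sqrt.1
  have hρH : hρ.sqrtᴴ = hρ.sqrt := hρ.posSemidef_sqrt.1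
  have hσH : hσ.sqrtᴴ = hσ.sqrt := hσ.posSemidef_sqrt.1
  have hωH : hω.sqrtᴴ = hω.sqrt := hω.posSemidef_sqrt.1
  rw [psqrt_eq hR, psqrt_eq hS, psqrt_eq hρ, psqrt_eq hσ, psqrt_eq hω]
  have habsσ : hR.sqrt * (Q * σ * Q) * hR.sqrt = hR.sqrt * σ * hR.sqrt := by
    calc hR.sqrt * (Q * σ * Q) * hR.sqrt = (hR.sqrt * Q) * σ * (Q * hR.sqrt) := by noncomm_ring
      _ = hR.sqrt * σ * hR.sqrt := by rw [hRQ, hQR]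
  have habsρ : hS.sqrt * (Q * ρ * Q) * hS.sqrt = hS.sqrt * ρ * hS.sqrt := by
    calc hS.sqrt * (Q * ρ * Q) * hS.sqrt = (hS.sqrt * Q) * ρ * (Q * hS.sqrt) := by noncomm_ring
      _ = hS.sqrt * ρ * hS.sqrt := by rw [hSQ, hQS]
  have eB : (hR.sqrt * hσ.sqrt) * (hR.sqrt * hσ.sqrt)ᴴ = hR.sqrt * (Q * σ * Q) * hR.sqrt := by
    rw [conjTranspose_mul, hσH, hRH, habsσ]
    calc hR.sqrt * hσ.sqrt * (hσ.sqrt * hR.sqrt)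
        = hR.sqrt * (hσ.sqrt * hσ.sqrt) * hR.sqrt := by noncomm_ring
      _ = hR.sqrt * σ * hR.sqrt := by rw [hσ.sqrt_mul_self]
  have eC : (hR.sqrt * hS.sqrt)ᴴ * (hR.sqrt * hS.sqrt) = hS.sqrt * (Q * ρ * Q) * hS.sqrt := by
    rw [conjTranspose_mul, hSH, hRH]
    calc hS.sqrt * hR.sqrt * (hR.sqrt * hS.sqrt)
        = hS.sqrt * (hR.sqrt * hR.sqrt) * hS.sqrt := by noncomm_ring
      _ = hS.sqrt * (Q * ρ * Q) * hS.sqrt := by rw [hR.sqrt_mul_self]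
  have eD : (hR.sqrt * hS.sqrt) * (hR.sqrt * hS.sqrt)ᴴ = hR.sqrt * (Q * σ * Q) * hR.sqrt := by
    rw [conjTranspose_mul, hSH, hRH]
    calc hR.sqrt * hS.sqrt * (hS.sqrt * hR.sqrt)
        = hR.sqrt * (hS.sqrt * hS.sqrt) * hR.sqrt := by noncomm_ring
      _ = hR.sqrt * (Q * σ * Q) * hR.sqrt := by rw [hS.sqrt_mul_self]
  have eE : (hρ.sqrt * hS.sqrt)ᴴ * (hρ.sqrt * hS.sqrt) = hS.sqrt * (Q * ρ * Q) * hS.sqrt := by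
    rw [conjTranspose_mul, hSH, hρH, habsρ]
    calc hS.sqrt * hρ.sqrt * (hρ.sqrt * hS.sqrt)
        = hS.sqrt * (hρ.sqrt * hρ.sqrt) * hS.sqrt := by noncomm_ring
      _ = hS.sqrt * ρ * hS.sqrt := by rw [hρ.sqrt_mul_self]
  have eF : (hω.sqrt * hσ.sqrt)ᴴ * (hω.sqrt * hσ.sqrt) = hσ.sqrt * ω * hσ.sqrt := by
    rw [conjTranspose_mul, hσH, hωH]
    calc hσ.sqrt * hω.sqrt * (hω.sqrt * hσ.sqrt)
        = hσ.sqrt * (hω.sqrt * hω.sqrt) * hσ.sqrt := by noncomm_ring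
      _ = hσ.sqrt * ω * hσ.sqrt := by rw [hω.sqrt_mul_self]
  have eG : (hρ.sqrt * hσ.sqrt)ᴴ * (hρ.sqrt * hσ.sqrt) = hσ.sqrt * ρ * hσ.sqrt := by
    rw [conjTranspose_mul, hσH, hρH]
    calc hσ.sqrt * hρ.sqrt * (hρ.sqrt * hσ.sqrt)
        = hσ.sqrt * (hρ.sqrt * hρ.sqrt) * hσ.sqrt := by noncomm_ring
      _ = hσ.sqrt * ρ * hσ.sqrt := by rw [hρ.sqrt_mul_self]
  have key2 : traceNorm (hR.sqrt * hσ.sqrt) = traceNorm (hR.sqrt * hS.sqrt) := by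
    show (psqrt ((hR.sqrt * hσ.sqrt)ᴴ * (hR.sqrt * hσ.sqrt))).trace.re
        = (psqrt ((hR.sqrt * hS.sqrt)ᴴ * (hR.sqrt * hS.sqrt))).trace.re
    have t : (psqrt ((hR.sqrt * hσ.sqrt)ᴴ * (hR.sqrt * hσ.sqrt))).trace
        = (psqrt ((hR.sqrt * hS.sqrt)ᴴ * (hR.sqrt * hS.sqrt))).trace := by
      rw [trace_psqrt_swap (hR.sqrt * hσ.sqrt), trace_psqrt_swap (hR.sqrt * hS.sqrt), eB, eD]
    exact congrArg Complex.re t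
  have key1 : traceNorm (hR.sqrt * hσ.sqrt) = traceNorm (hρ.sqrt * hS.sqrt) := by
    rw [key2]
    show (psqrt ((hR.sqrt * hS.sqrt)ᴴ * (hR.sqrt * hS.sqrt))).trace.re
        = (psqrt ((hρ.sqrt * hS.sqrt)ᴴ * (hρ.sqrt * hS.sqrt))).trace.re
    rw [eC, eE]
  refine ⟨key1, key2, ?_⟩
  have hσρσ : (hσ.sqrt * ρ * hσ.sqrt).PosSemidef := by
    have := hρ.mul_mul_conjTranspose_same hσ.sqrt
    rwa [hσH] at this
  have hσωσ : (hσ.sqrt * ω * hσ.sqrt).PosSemidef := by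
    have := hω.mul_mul_conjTranspose_same hσ.sqrt
    rwa [hσH] at this
  have hle2 : (hσ.sqrt * ω * hσ.sqrt - hσ.sqrt * ρ * hσ.sqrt).PosSemidef := by
    have h := hωρ.mul_mul_conjTranspose_same hσ.sqrt
    rw [hσH] at h
    have hsplit : hσ.sqrt * (ω - ρ) * hσ.sqrt
        = hσ.sqrt * ω * hσ.sqrt - hσ.sqrt * ρ * hσ.sqrt := by noncomm_ring
    rwa [hsplit] at h
  have hm := trace_psqrt_mono hσρσ hσωσ hle2
  show (psqrt ((hρ.sqrt * hσ.sqrt)ᴴ * (hρ.sqrt * hσ.sqrt))).trace.re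
      ≤ (psqrt ((hω.sqrt * hσ.sqrt)ᴴ * (hω.sqrt * hσ.sqrt))).trace.re
  rw [eG, eF]
  exact hm


end Paper
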